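/- arXiv:2210.05748 — 3 statements merged into one kernel-verified Lean document; each statement's English description precedes it below -/
import Mathlib

section
/- Let Q be a normal lattice polytope in ℝ^d and F a face of Q of dimension g with a strict supporting hyperplane (or F = Q). Then every integer vector x in the linear span L_F of differences of points of F can be written as an integer linear combination of lattice points of F ∩ ℤ^d whose coefficients sum to zero. -/
open Finset

/-- A point of `ℝ^d` with integer coordinates. -/
def IsLatticePt {d : ℕ} (x : Fin d → ℝ) : Prop := ∀ i, ∃ n : ℤ, x i = n

lemma lat_add {d : ℕ} {x y : Fin d → ℝ} (hx : IsLatticePt x) (hy : IsLatticePt y) :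
    IsLatticePt (x + y) := fun i => by
  obtain ⟨n, hn⟩ := hx i; obtain ⟨m, hm⟩ := hy i
  exact ⟨n + m, by simp [hn, hm]⟩

lemma lat_nsmul {d : ℕ} (n : ℕ) {x : Fin d → ℝ} (hx : IsLatticePt x) :
    IsLatticePt ((n : ℝ) • x) := fun i => by
  obtain ⟨m, hm⟩ := hx i
  exact ⟨n * m, by simp [hm]⟩

lemma lat_sum {d : ℕ} (T : Finset (Fin d → ℝ)) (h : ∀ t ∈ T, IsLatticePt t) :
    IsLatticePt (∑ t ∈ T, t) := by
  classical
  induction T using Finset.induction_on with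
  | empty => exact fun i => ⟨0, by simp⟩
  | @insert a s hnotmem ih =>
    rw [Finset.sum_insert hnotmem]
    exact lat_add (h a (by simp)) (ih fun t ht => h t (by simp [ht]))

/-- The linear functional `m ↦ ∑ i, N i * m i`. -/
noncomputable def dotL {d : ℕ} (N : Fin d → ℝ) : (Fin d → ℝ) →ₗ[ℝ] ℝ where
  toFun m := ∑ i, N i * m i
  map_add' a b := by simp [mul_add, Finset.sum_add_distrib]
  map_smul' r a := by
    simp only [smul_eq_mul, Pi.smul_apply, RingHom.id_apply, Finset.mul_sum]
    exact Finset.sum_congr rfl fun i _ => by ring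

@[simp] lemma dotL_apply {d : ℕ} (N m : Fin d → ℝ) : dotL N m = ∑ i, N i * m i := rfl

/-- If `Q` is a normal lattice polytope and `F` is a face of `Q`
(either `F = Q` or `F` has a strict supporting hyperplane), then every integer
vector in the linear span `L_F` of differences of points of `F` is an integer
linear combination of lattice points of `F` with coefficients summing to zero. -/
theorem normal_polytope_face_lattice_combination {d : ℕ}
    (S : Finset (Fin d → ℝ)) (hSlat : ∀ v ∈ S, IsLatticePt v)
    (Q : Set (Fin d → ℝ)) (hQ : Q = convexHull ℝ (S : Set (Fin d → ℝ)))
    (hnormal : ∀ k : ℕ, 0 < k → ∀ x : Fin d → ℝ, IsLatticePt x →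
      x ∈ (fun y => (k : ℝ) • y) '' Q →
      ∃ w : Fin k → (Fin d → ℝ), (∀ i, w i ∈ Q ∧ IsLatticePt (w i)) ∧ ∑ i, w i = x)
    (F : Set (Fin d → ℝ))
    (hface : F = Q ∨ ∃ (N : Fin d → ℝ) (c : ℝ), F ⊆ Q ∧
      (∀ m ∈ F, ∑ i, N i * m i = c) ∧ (∀ m ∈ Q, m ∉ F → ∑ i, N i * m i < c))
    (x : Fin d → ℝ) (hxlat : IsLatticePt x)
    (hxspan : x ∈ Submodule.span ℝ {y : Fin d → ℝ | ∃ a ∈ F, ∃ b ∈ F, y = a - b}) :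
    ∃ (s : ℕ) (w : Fin s → (Fin d → ℝ)) (cf : Fin s → ℤ),
      (∀ i, w i ∈ F ∧ IsLatticePt (w i)) ∧ (∑ i, cf i) = 0 ∧
      x = ∑ i, (cf i : ℝ) • w i := by
  classical
  -- Step 1: find a finite lattice set T with F = conv T, together with the key face property.
  obtain ⟨T, hTS, hTF, hKey⟩ :
      ∃ T : Finset (Fin d → ℝ), T ⊆ S ∧ F = convexHull ℝ (T : Set (Fin d → ℝ)) ∧
        ∀ (k : ℕ) (w : Fin k → (Fin d → ℝ)), (∀ i, w i ∈ Q) →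
          (∃ z ∈ F, (k : ℝ) • z = ∑ i, w i) → ∀ i, w i ∈ F := by
    rcases hface with hFQ | ⟨N, c, hFQ, hFc, hQlt⟩
    · exact ⟨S, le_refl _, by rw [hFQ, hQ], fun k w hw _ i => hFQ ▸ hw i⟩
    · have hFc' : ∀ m ∈ F, dotL N m = c := hFc
      have hQlt' : ∀ m ∈ Q, m ∉ F → dotL N m < c := hQlt
      have hQle : ∀ m ∈ Q, dotL N m ≤ c := by
        intro m hm
        by_cases hmF : m ∈ F
        · exact le_of_eq (hFc' m hmF)
        · exact le_of_lt (hQlt' m hm hmF)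
      have hmemF : ∀ m ∈ Q, dotL N m = c → m ∈ F := by
        intro m hm hc
        by_contra hmF
        exact absurd hc (ne_of_lt (hQlt' m hm hmF))
      have hFconv : Convex ℝ F := by
        have hFeq : F = Q ∩ {m | dotL N m = c} := by
          apply Set.Subset.antisymm
          · exact fun m hm => ⟨hFQ hm, hFc' m hm⟩
          · exact fun m hm => hmemF m hm.1 hm.2
        rw [hFeq]
        exact (hQ ▸ convex_convexHull ℝ _).inter
          (convex_hyperplane ((dotL N).isLinear) c)
      refine ⟨S.filter (fun v => dotL N v = c), Finset.filter_subset _ _, ?_, ?_⟩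
      · apply Set.Subset.antisymm
        · intro m hm
          have hmQ : m ∈ Q := hFQ hm
          rw [hQ, Finset.convexHull_eq] at hmQ
          obtain ⟨ω, hω0, hω1, hωm⟩ := hmQ
          rw [Finset.centerMass_eq_of_sum_1 _ _ hω1] at hωm
          simp only [id] at hωm
          have hSle : ∀ v ∈ S, dotL N v ≤ c := fun v hv =>
            hQle v (hQ ▸ subset_convexHull ℝ _ hv)
          have hsum0 : ∑ v ∈ S, ω v * (c - dotL N v) = 0 := by
            have h2 : dotL N (∑ v ∈ S, ω v • v) = ∑ v ∈ S, ω v * dotL N v := by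
              rw [map_sum]
              exact Finset.sum_congr rfl fun v _ => by rw [map_smul]; rfl
            have h3 : dotL N m = c := hFc' m hm
            rw [hωm] at h2
            have : ∑ v ∈ S, ω v * (c - dotL N v)
                = (∑ v ∈ S, ω v) * c - ∑ v ∈ S, ω v * dotL N v := by
              rw [Finset.sum_mul, ← Finset.sum_sub_distrib]
              exact Finset.sum_congr rfl fun v _ => by ring
            rw [this, hω1, ← h2, h3]
            ring
          have hzero : ∀ v ∈ S, ω v * (c - dotL N v) = 0 :=
            (Finset.sum_eq_zero_iff_of_nonneg (fun v hv =>
              mul_nonneg (hω0 v hv) (sub_nonneg.2 (hSle v hv)))).1 hsum0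
          have hsupp : ∀ v ∈ S, ω v ≠ 0 → dotL N v = c := by
            intro v hv hne
            rcases mul_eq_zero.1 (hzero v hv) with h | h
            · exact absurd h hne
            · linarith [sub_eq_zero.1 h]
          have hT1 : ∑ v ∈ S.filter (fun v => dotL N v = c), ω v = 1 := by
            rw [Finset.sum_filter_of_ne (fun v hv hne => hsupp v hv hne)]
            exact hω1
          have hTm : ∑ v ∈ S.filter (fun v => dotL N v = c), ω v • v = m := by
            rw [Finset.sum_filter_of_ne (fun v hv hne => hsupp v hv ?_)]
            · exact hωm
            · intro h0
              apply hne
              rw [h0, zero_smul]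
          have hmem := Finset.centerMass_mem_convexHull
            (S.filter (fun v => dotL N v = c)) (fun v hv => hω0 v (Finset.mem_of_mem_filter v hv))
            (by rw [hT1]; norm_num) (fun v hv => Finset.mem_coe.2 hv) (z := id)
          rwa [Finset.centerMass_eq_of_sum_1 _ _ hT1, show ∑ v ∈ S.filter
            (fun v => dotL N v = c), ω v • id v = m from hTm] at hmem
        · apply convexHull_min _ hFconv
          intro v hv
          simp only [Finset.coe_filter, Set.mem_setOf_eq] at hv
          exact hmemF v (hQ ▸ subset_convexHull ℝ _ hv.1) hv.2
      · rintro k w hwQ ⟨z, hzF, hz⟩ i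
        rcases Nat.eq_zero_or_pos k with rfl | hk
        · exact i.elim0
        apply hmemF (w i) (hwQ i)
        have hφsum : ∑ j, dotL N (w j) = (k : ℝ) * c := by
          rw [← map_sum, ← hz, map_smul, smul_eq_mul, hFc' z hzF]
        by_contra hne
        have hlt : dotL N (w i) < c := lt_of_le_of_ne (hQle _ (hwQ i)) hne
        have hstrict : ∑ j, dotL N (w j) < ∑ _j : Fin k, c :=
          Finset.sum_lt_sum (fun j _ => hQle _ (hwQ j)) ⟨i, Finset.mem_univ i, hlt⟩
        rw [hφsum] at hstrict
        simp only [Finset.sum_const, Finset.card_univ, Fintype.card_fin, nsmul_eq_mul] at hstrict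
        exact lt_irrefl _ hstrict
  -- Step 2: main argument.
  rcases T.eq_empty_or_nonempty with rfl | ⟨t₀, ht₀⟩
  · have hFempty : F = ∅ := by simpa using hTF
    have hx0 : x = 0 := by
      have hset : {y : Fin d → ℝ | ∃ a ∈ F, ∃ b ∈ F, y = a - b} = ∅ := by
        simp [hFempty]
      rw [hset, Submodule.span_empty, Submodule.mem_bot] at hxspan
      exact hxspan
    exact ⟨0, Fin.elim0, Fin.elim0, fun i => i.elim0, by simp, by simp [hx0]⟩
  · have hTsubF : ∀ t ∈ T, t ∈ F := fun t ht => hTF ▸ subset_convexHull ℝ _ ht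
    have hTlat : ∀ t ∈ T, IsLatticePt t := fun t ht => hSlat t (hTS ht)
    set T' : Finset (Fin d → ℝ) := T.image (fun t => t - t₀) with hT'
    -- x is a real combination of the t - t₀
    have hspan : x ∈ Submodule.span ℝ (T' : Set (Fin d → ℝ)) := by
      refine Submodule.span_le.2 ?_ hxspan
      rintro y ⟨a, ha, b, hb, rfl⟩
      have key : ∀ m ∈ F, m - t₀ ∈ Submodule.span ℝ (T' : Set (Fin d → ℝ)) := by
        intro m hm
        rw [hTF] at hm
        have hsub : (convexHull ℝ (T : Set (Fin d → ℝ))) ⊆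
            {a | a - t₀ ∈ Submodule.span ℝ (T' : Set (Fin d → ℝ))} := by
          apply convexHull_min
          · intro t ht
            exact Submodule.subset_span (Finset.mem_coe.2
              (Finset.mem_image_of_mem _ (Finset.mem_coe.1 ht)))
          · intro a ha b hb s t hs ht hst
            simp only [Set.mem_setOf_eq] at *
            have h1 : s • t₀ + t • t₀ = t₀ := by rw [← add_smul, hst, one_smul]
            have heq : s • a + t • b - t₀ = s • (a - t₀) + t • (b - t₀) := by
              have h2 : s • (a - t₀) + t • (b - t₀) = s • a + t • b - (s • t₀ + t • t₀) := by
                module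
              rw [h2, h1]
            rw [heq]
            exact Submodule.add_mem _ (Submodule.smul_mem _ _ ha) (Submodule.smul_mem _ _ hb)
        exact hsub hm
      have hmem := Submodule.sub_mem _ (key a ha) (key b hb)
      simpa using hmem
    obtain ⟨f, -, hf⟩ := Submodule.mem_span_finset.1 hspan
    set g : (Fin d → ℝ) → ℝ := fun t => f (t - t₀) with hg
    have hx : ∑ t ∈ T, g t • (t - t₀) = x := by
      rw [← hf, hT', Finset.sum_image]
      intro a _ b _ h
      have := congrArg (· + t₀) h
      simpa using this
    set G := ∑ t ∈ T, g t with hG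
    have hxg : x = ∑ t ∈ T, g t • t - G • t₀ := by
      rw [← hx]
      simp [smul_sub, Finset.sum_sub_distrib, Finset.sum_smul, hG]
    obtain ⟨n, hn⟩ := exists_nat_ge ((∑ t ∈ T, |g t|) + |G| + 1)
    have habsnn : (0:ℝ) ≤ ∑ t ∈ T, |g t| := Finset.sum_nonneg fun t _ => abs_nonneg _
    have habs : ∀ t ∈ T, |g t| ≤ (n:ℝ) := by
      intro t ht
      have h1 : |g t| ≤ ∑ t ∈ T, |g t| :=
        Finset.single_le_sum (f := fun t => |g t|) (fun t _ => abs_nonneg _) ht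
      have h2 : (0:ℝ) ≤ |G| := abs_nonneg _
      linarith
    have hGle : |G| ≤ (n:ℝ) := by
      have h2 : (0:ℝ) ≤ |G| := abs_nonneg _
      linarith
    have hn1 : 1 ≤ n := by
      have : (1:ℝ) ≤ (n:ℝ) := by linarith [abs_nonneg G]
      exact_mod_cast this
    set k := n * (T.card + 1) with hk
    have hkpos : 0 < k := Nat.mul_pos hn1 (Nat.succ_pos _)
    set μ : (Fin d → ℝ) → ℝ := fun t => g t + n + (if t = t₀ then (n : ℝ) - G else 0) with hμ
    have hμ0 : ∀ t ∈ T, 0 ≤ μ t := by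
      intro t ht
      have h1 := abs_le.1 (habs t ht)
      have h2 := abs_le.1 hGle
      rcases eq_or_ne t t₀ with rfl | h
      · simp only [hμ]
        simp only [if_true]
        linarith [h1.1]
      · simp only [hμ]
        rw [if_neg h]
        linarith [h1.1]
    have hμsum : ∑ t ∈ T, μ t = (k : ℝ) := by
      simp only [hμ, Finset.sum_add_distrib, Finset.sum_ite_eq' T t₀, ht₀, if_true,
        Finset.sum_const, nsmul_eq_mul, ← hG]
      push_cast [hk]
      ring
    set p := x + (n : ℝ) • (∑ t ∈ T, t) + (n : ℝ) • t₀ with hp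
    have hμp : ∑ t ∈ T, μ t • t = p := by
      have h1 : ∑ t ∈ T, (if t = t₀ then (n:ℝ) - G else 0) • t = ((n:ℝ) - G) • t₀ := by
        rw [show (fun t => (if t = t₀ then (n:ℝ) - G else 0) • t)
            = fun t => (if t = t₀ then ((n:ℝ) - G) • t else 0) from ?_]
        · exact Finset.sum_ite_eq' T t₀ (fun t => ((n:ℝ) - G) • t) ▸ by simp [ht₀]
        · funext t
          by_cases h : t = t₀ <;> simp [h]
      have h2 : ∑ t ∈ T, μ t • t
          = (∑ t ∈ T, g t • t) + (n:ℝ) • (∑ t ∈ T, t) + ((n:ℝ) - G) • t₀ := by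
        simp only [hμ, add_smul, Finset.sum_add_distrib, h1, Finset.smul_sum]
      rw [h2, hp, hxg]
      module
    have hplat : IsLatticePt p := by
      exact lat_add (lat_add hxlat (lat_nsmul n (lat_sum T hTlat)))
        (lat_nsmul n (hTlat t₀ ht₀))
    set z := T.centerMass μ id with hzdef
    have hzT : z ∈ convexHull ℝ (T : Set (Fin d → ℝ)) :=
      Finset.centerMass_mem_convexHull T hμ0 (by rw [hμsum]; exact_mod_cast hkpos)
        (fun i hi => Finset.mem_coe.2 hi)
    have hkz : (k : ℝ) • z = p := by
      rw [hzdef, Finset.centerMass, hμsum,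
        smul_inv_smul₀ (by exact_mod_cast hkpos.ne' : (k:ℝ) ≠ 0)]
      simpa using hμp
    have hzQ : z ∈ Q := by
      rw [hQ]
      exact convexHull_mono (Finset.coe_subset.2 hTS) hzT
    obtain ⟨w, hw, hwsum⟩ := hnormal k hkpos p hplat ⟨z, hzQ, hkz⟩
    have hwF : ∀ i, w i ∈ F :=
      hKey k w (fun i => (hw i).1) ⟨z, hTF ▸ hzT, by rw [hkz, hwsum]⟩
    -- assemble
    set u : Fin T.card → (Fin d → ℝ) := fun i => ((T.equivFin.symm i : T) : Fin d → ℝ) with hu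
    have husum : ∑ i, u i = ∑ t ∈ T, t := by
      rw [hu]
      rw [Equiv.sum_comp T.equivFin.symm (fun a : T => (a : Fin d → ℝ))]
      exact Finset.sum_coe_sort T (fun t => t)
    refine ⟨k + (T.card + 1),
      Fin.addCases w (Fin.cons t₀ u),
      Fin.addCases (fun _ => (1:ℤ)) (fun _ => -(n:ℤ)), ?_, ?_, ?_⟩
    · intro i
      refine Fin.addCases (fun i => ?_) (fun j => ?_) i
      · simp only [Fin.addCases_left]
        exact ⟨hwF i, (hw i).2⟩
      · simp only [Fin.addCases_right]
        refine Fin.cases ?_ (fun j' => ?_) j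
        · simp only [Fin.cons_zero]
          exact ⟨hTsubF t₀ ht₀, hTlat t₀ ht₀⟩
        · simp only [Fin.cons_succ, hu]
          exact ⟨hTsubF _ (T.equivFin.symm j').2, hTlat _ (T.equivFin.symm j').2⟩
    · rw [Fin.sum_univ_add]
      simp only [Fin.addCases_left, Fin.addCases_right, Finset.sum_const,
        Finset.card_univ, Fintype.card_fin, smul_eq_mul, mul_one, nsmul_eq_mul]
      push_cast [hk]
      ring
    · rw [Fin.sum_univ_add]
      simp only [Fin.addCases_left, Fin.addCases_right, Int.cast_one, one_smul,
        Int.cast_neg, Int.cast_natCast]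
      rw [hwsum, ← Finset.smul_sum, Fin.sum_cons, husum, hp]
      module
end

section
/- Let Q ⊆ ℝ^d be a full-dimensional normal lattice polytope. Then for each standard basis vector e_i there exist integers n₁, ..., n_s with Σ n_j = 0 such that e_i = Σ_j n_j m_j, where m₁, ..., m_s are the lattice points of Q. -/
open Finset

/-- For a full-dimensional normal lattice polytope `Q` with lattice
points `A`, each standard basis vector `e_i` is an integer linear combination of
lattice points of `Q` with coefficients summing to zero. -/
theorem basis_vector_combination {d : ℕ} (A : Finset (Fin d → ℤ))
    (Q : Set (Fin d → ℝ))
    (hQ : Q = convexHull ℝ ((fun m : Fin d → ℤ => fun i => (m i : ℝ)) '' (A : Set (Fin d → ℤ))))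
    (hA : ∀ m : Fin d → ℤ, m ∈ A ↔ (fun i => (m i : ℝ)) ∈ Q)
    (hfull : Submodule.span ℝ {y : Fin d → ℝ | ∃ a ∈ Q, ∃ b ∈ Q, y = a - b} = ⊤)
    (hnormal : ∀ k : ℕ, 0 < k → ∀ m : Fin d → ℤ,
      (fun i => (m i : ℝ)) ∈ (fun y : Fin d → ℝ => (k : ℝ) • y) '' Q →
      ∃ w : Fin k → (Fin d → ℤ), (∀ i, w i ∈ A) ∧ ∑ i, w i = m)
    (i : Fin d) :
    ∃ cf : (Fin d → ℤ) → ℤ, (∑ m ∈ A, cf m) = 0 ∧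
      (Pi.single i 1 : Fin d → ℤ) = ∑ m ∈ A, cf m • m := by
  classical
  have hQconv : Convex ℝ Q := hQ ▸ convex_convexHull ℝ _
  -- Q is nonempty
  have hQne : Q.Nonempty := by
    by_contra h
    rw [Set.not_nonempty_iff_eq_empty] at h
    have he : {y : Fin d → ℝ | ∃ a ∈ Q, ∃ b ∈ Q, y = a - b} = ∅ := by
      simp [h]
    rw [he, Submodule.span_empty] at hfull
    have : Nontrivial (Fin d → ℝ) :=
      ⟨⟨0, Pi.single i 1, fun h => by
        have := congrFun h i; simp [Pi.single_apply] at this⟩⟩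
    exact absurd hfull bot_ne_top
  -- affine span is top
  have hvs : vectorSpan ℝ Q = ⊤ := by
    rw [vectorSpan_def, ← hfull]
    congr 1
    ext y
    constructor
    · rintro ⟨a, ha, b, hb, rfl⟩
      exact ⟨a, ha, b, hb, rfl⟩
    · rintro ⟨a, ha, b, hb, rfl⟩
      exact ⟨a, ha, b, hb, rfl⟩
  have haff : affineSpan ℝ Q = ⊤ :=
    (AffineSubspace.affineSpan_eq_top_iff_vectorSpan_eq_top_of_nonempty ℝ _ _ hQne).2 hvs
  obtain ⟨x, hx⟩ := hQconv.interior_nonempty_iff_affineSpan_eq_top.2 haff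
  obtain ⟨ε, hε, hball⟩ := Metric.isOpen_iff.1 isOpen_interior x hx
  -- pick n with 2/n < ε
  obtain ⟨n, hn⟩ := exists_nat_gt (2 / ε)
  have hn0 : (0:ℝ) < n := lt_trans (div_pos two_pos hε) hn
  have hnn : 0 < n := by exact_mod_cast hn0
  have h2n : 2 / (n:ℝ) < ε := by
    rw [div_lt_iff₀ hn0]
    rw [div_lt_iff₀ hε] at hn
    linarith [hn]
  set a : Fin d → ℤ := fun j => ⌊(n:ℝ) * x j⌋ with ha_def
  have hclose : ∀ j, |(a j : ℝ) / n - x j| ≤ 1 / n := by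
    intro j
    have h1 : (a j : ℝ) ≤ (n:ℝ) * x j := Int.floor_le _
    have h2 : (n:ℝ) * x j - 1 < a j := Int.sub_one_lt_floor _
    have e : (a j:ℝ)/n - x j = ((a j:ℝ) - n * x j)/n := by field_simp
    rw [e, abs_div, abs_of_pos hn0]
    gcongr
    rw [abs_le]
    constructor <;> linarith
  -- the two nearby rational points with denominator n, n²
  set p2 : Fin d → ℝ := fun j => (a j : ℝ) / n with hp2_def
  set p1 : Fin d → ℝ := fun j => (a j : ℝ) / n + (Pi.single i (1:ℝ) : Fin d → ℝ) j / (n:ℝ)^2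
    with hp1_def
  have hn2 : (0:ℝ) < (n:ℝ)^2 := by positivity
  have hp2Q : p2 ∈ Q := by
    apply interior_subset (hball ?_)
    rw [Metric.mem_ball, dist_pi_lt_iff hε]
    intro j
    rw [Real.dist_eq]
    calc |p2 j - x j| ≤ 1 / n := hclose j
    _ < ε := by rw [div_lt_iff₀ hn0]; rw [div_lt_iff₀ hn0] at h2n; linarith
  have hp1Q : p1 ∈ Q := by
    apply interior_subset (hball ?_)
    rw [Metric.mem_ball, dist_pi_lt_iff hε]
    intro j
    rw [Real.dist_eq]
    have hb : |(Pi.single i (1:ℝ) : Fin d → ℝ) j / (n:ℝ)^2| ≤ 1 / n := by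
      rw [abs_div, abs_of_pos hn2]
      have h1 : |(Pi.single i (1:ℝ) : Fin d → ℝ) j| ≤ 1 := by
        rcases eq_or_ne j i with rfl | hji
        · simp
        · simp [Pi.single_apply, hji]
      have h1n : (1:ℝ) ≤ n := by exact_mod_cast hnn
      have hle : (n:ℝ) ≤ (n:ℝ)^2 := by nlinarith
      calc |(Pi.single i (1:ℝ) : Fin d → ℝ) j| / (n:ℝ)^2 ≤ 1 / (n:ℝ)^2 := by gcongr
      _ ≤ 1 / (n:ℝ) := one_div_le_one_div_of_le hn0 hle
    calc |p1 j - x j| = |((a j:ℝ)/n - x j) + (Pi.single i (1:ℝ) : Fin d → ℝ) j / (n:ℝ)^2| := by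
          rw [hp1_def]; ring_nf
    _ ≤ |(a j:ℝ)/n - x j| + |(Pi.single i (1:ℝ) : Fin d → ℝ) j / (n:ℝ)^2| := abs_add_le _ _
    _ ≤ 1/n + 1/n := add_le_add (hclose j) hb
    _ = 2/(n:ℝ) := by ring
    _ < ε := h2n
  -- the two integer points in (n^2) Q
  have hk0 : 0 < n^2 := pow_pos hnn 2
  obtain ⟨w1, hw1A, hw1⟩ := hnormal (n^2) hk0 ((n:ℤ) • a + Pi.single i 1)
    ⟨p1, hp1Q, by
      funext j
      rcases eq_or_ne j i with rfl | hji
      · simp only [hp1_def, Pi.smul_apply, Pi.add_apply, Pi.single_eq_same, smul_eq_mul]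
        push_cast
        field_simp
      · simp only [hp1_def, Pi.smul_apply, Pi.add_apply, Pi.single_apply, if_neg hji,
          smul_eq_mul]
        push_cast
        field_simp⟩
  obtain ⟨w2, hw2A, hw2⟩ := hnormal (n^2) hk0 ((n:ℤ) • a)
    ⟨p2, hp2Q, by
      funext j
      simp only [hp2_def, Pi.smul_apply, smul_eq_mul]
      push_cast
      field_simp⟩
  -- build coefficients by counting fibers
  set c1 : (Fin d → ℤ) → ℕ := fun m => (univ.filter fun l => w1 l = m).card with hc1
  set c2 : (Fin d → ℤ) → ℕ := fun m => (univ.filter fun l => w2 l = m).card with hc2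
  have hsum1 : ∑ m ∈ A, c1 m = n^2 := by
    have := Finset.card_eq_sum_card_fiberwise (f := w1) (s := univ) (t := A)
      (fun l _ => hw1A l)
    simpa using this.symm
  have hsum2 : ∑ m ∈ A, c2 m = n^2 := by
    have := Finset.card_eq_sum_card_fiberwise (f := w2) (s := univ) (t := A)
      (fun l _ => hw2A l)
    simpa using this.symm
  have hvec1 : ∑ m ∈ A, c1 m • m = ∑ l, w1 l := by
    rw [← Finset.sum_fiberwise_of_maps_to (g := w1) (fun l _ => hw1A l) (fun l => w1 l)]
    refine Finset.sum_congr rfl fun m hm => ?_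
    rw [Finset.sum_congr rfl (fun l hl => (Finset.mem_filter.1 hl).2), Finset.sum_const]
  have hvec2 : ∑ m ∈ A, c2 m • m = ∑ l, w2 l := by
    rw [← Finset.sum_fiberwise_of_maps_to (g := w2) (fun l _ => hw2A l) (fun l => w2 l)]
    refine Finset.sum_congr rfl fun m hm => ?_
    rw [Finset.sum_congr rfl (fun l hl => (Finset.mem_filter.1 hl).2), Finset.sum_const]
  refine ⟨fun m => (c1 m : ℤ) - (c2 m : ℤ), ?_, ?_⟩
  · rw [Finset.sum_sub_distrib, ← Nat.cast_sum, ← Nat.cast_sum, hsum1, hsum2, sub_self]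
  · have : ∑ m ∈ A, ((c1 m : ℤ) - (c2 m : ℤ)) • m
        = (∑ m ∈ A, c1 m • m) - (∑ m ∈ A, c2 m • m) := by
      rw [← Finset.sum_sub_distrib]
      refine Finset.sum_congr rfl fun m _ => ?_
      rw [sub_smul, natCast_zsmul, natCast_zsmul]
    rw [this, hvec1, hvec2, hw1, hw2]
    abel
end

section
/- Let H(x,y,z) = z − y − (x−1)² and γ ∈ ℂ. Along the curve t ↦ (1+γt, t, t+γ²t²), which lies in the zero set of H, the log-gradient (−2(1+γt)γt, −t, t+γ²t²) converges projectively, as t → 0, to the direction [−2γ : −1 : 1]. Hence every direction of the form [α : −1 : 1] arises as a limiting log-gradient direction along some curve on V(H) approaching (1,0,0). -/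
open Filter

/-- The log-gradient `∇_log H(z) = (z₁ ∂H/∂z₁, z₂ ∂H/∂z₂, z₃ ∂H/∂z₃)`. -/
noncomputable def logGrad (H : (Fin 3 → ℂ) → ℂ) (z : Fin 3 → ℂ) : Fin 3 → ℂ :=
  fun i => z i * fderiv ℂ H z (Pi.single i 1)

/-- `H(x,y,z) = z − y − (x−1)²`. -/
noncomputable def Hpoly : (Fin 3 → ℂ) → ℂ := fun v => v 2 - v 1 - (v 0 - 1) ^ 2

/-- The curve `t ↦ (1+γt, t, t+γ²t²)`. -/
noncomputable def curveγ (γ : ℂ) : ℂ → (Fin 3 → ℂ) :=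
  fun t => ![1 + γ * t, t, t + γ ^ 2 * t ^ 2]

lemma hfd (z : Fin 3 → ℂ) : HasFDerivAt Hpoly
    (((ContinuousLinearMap.proj (2 : Fin 3) : (Fin 3 → ℂ) →L[ℂ] ℂ) - (ContinuousLinearMap.proj (1 : Fin 3) : (Fin 3 → ℂ) →L[ℂ] ℂ))
      - (2 * (z 0 - 1)) • (ContinuousLinearMap.proj (0 : Fin 3) : (Fin 3 → ℂ) →L[ℂ] ℂ)) z := by
  have h0 : HasFDerivAt (fun v : Fin 3 → ℂ => (v 0 - 1) ^ 2)
      ((2 * (z 0 - 1)) • (ContinuousLinearMap.proj (0 : Fin 3) : (Fin 3 → ℂ) →L[ℂ] ℂ)) z := by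
    have h := ((ContinuousLinearMap.proj (0 : Fin 3) : (Fin 3 → ℂ) →L[ℂ] ℂ).hasFDerivAt (x := z)).sub_const 1
    have := h.mul h
    have e : (fun v : Fin 3 → ℂ => (v 0 - 1) ^ 2) = fun v => (v 0 - 1) * (v 0 - 1) := by
      funext v; ring
    rw [e]
    refine HasFDerivAt.congr_fderiv this ?_
    ext v
    simp [ContinuousLinearMap.proj]
    ring
  have h2 := (ContinuousLinearMap.proj (2 : Fin 3) : (Fin 3 → ℂ) →L[ℂ] ℂ).hasFDerivAt (x := z)
  have h1 := (ContinuousLinearMap.proj (1 : Fin 3) : (Fin 3 → ℂ) →L[ℂ] ℂ).hasFDerivAt (x := z)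
  exact (h2.sub h1).sub h0

lemma logGrad_eq (z : Fin 3 → ℂ) :
    logGrad Hpoly z = ![z 0 * (-(2 * (z 0 - 1))), -(z 1), z 2] := by
  have h := (hfd z).fderiv
  funext i
  simp only [logGrad, h]
  fin_cases i <;>
    simp [ContinuousLinearMap.proj, Pi.single] <;> ring

/-- along `t ↦ (1+γt, t, t+γ²t²) ⊆ V(H)`, the log-gradient
`(−2(1+γt)γt, −t, t+γ²t²)` converges projectively (after dividing by `t`) to
`[−2γ : −1 : 1]` as `t → 0`; hence every direction `[α : −1 : 1]` arises as a
limiting log-gradient direction along some such curve approaching `(1,0,0)`. -/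
theorem all_directions_arise :
    (∀ γ t : ℂ, Hpoly (curveγ γ t) = 0) ∧
    (∀ γ t : ℂ, logGrad Hpoly (curveγ γ t)
        = ![-2 * (1 + γ * t) * (γ * t), -t, t + γ ^ 2 * t ^ 2]) ∧
    (∀ γ : ℂ, Tendsto (fun t : ℂ => t⁻¹ • logGrad Hpoly (curveγ γ t))
        (nhdsWithin 0 {t : ℂ | t ≠ 0}) (nhds (![-2 * γ, -1, 1] : Fin 3 → ℂ))) ∧
    (∀ α : ℂ, ∃ γ : ℂ,
      Tendsto (fun t : ℂ => t⁻¹ • logGrad Hpoly (curveγ γ t))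
        (nhdsWithin 0 {t : ℂ | t ≠ 0}) (nhds (![α, -1, 1] : Fin 3 → ℂ))) := by
  have hlg : ∀ γ t : ℂ, logGrad Hpoly (curveγ γ t)
      = ![-2 * (1 + γ * t) * (γ * t), -t, t + γ ^ 2 * t ^ 2] := by
    intro γ t
    rw [logGrad_eq]
    funext i
    fin_cases i <;> simp [curveγ] <;> ring
  have key : ∀ γ : ℂ, Tendsto (fun t : ℂ => t⁻¹ • logGrad Hpoly (curveγ γ t))
      (nhdsWithin 0 {t : ℂ | t ≠ 0}) (nhds (![-2 * γ, -1, 1] : Fin 3 → ℂ)) := by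
    intro γ
    have hcont : Continuous fun t : ℂ => (![-2 * γ * (1 + γ * t), -1, 1 + γ ^ 2 * t] : Fin 3 → ℂ) := by
      apply continuous_pi
      intro i
      fin_cases i <;> simp <;> fun_prop
    have h0 : Tendsto (fun t : ℂ => (![-2 * γ * (1 + γ * t), -1, 1 + γ ^ 2 * t] : Fin 3 → ℂ))
        (nhdsWithin 0 {t : ℂ | t ≠ 0}) (nhds (![-2 * γ, -1, 1] : Fin 3 → ℂ)) := by
      have := (hcont.tendsto 0).mono_left (nhdsWithin_le_nhds (s := {t : ℂ | t ≠ 0}))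
      convert this using 2
      funext i
      fin_cases i <;> simp
    apply h0.congr'
    filter_upwards [self_mem_nhdsWithin] with t ht
    have ht' : t ≠ 0 := ht
    funext i
    rw [hlg]
    fin_cases i <;> simp [Pi.smul_apply, smul_eq_mul] <;> field_simp <;> ring
  refine ⟨?_, hlg, key, fun α => ⟨-α / 2, ?_⟩⟩
  · intro γ t
    simp [Hpoly, curveγ]
    ring
  · convert key (-α / 2) using 2
    funext i
    fin_cases i <;> simp <;> ring
end
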